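/- Let X be a Banach space, A ∈ B(X), and f analytic on an open neighbourhood of σ(A). Then the map T ↦ f(T) (holomorphic functional calculus) is Fréchet differentiable at A, with differential ΔA ↦ (1/2πi) ∫_Γ f(λ)(λ−A)⁻¹ ΔA (λ−A)⁻¹ dλ, where Γ is a contour surrounding σ(A) inside the domain of f; i.e. f(A+ΔA) = f(A) + (1/2πi)∫_Γ f(λ)(λ−A)⁻¹ΔA(λ−A)⁻¹dλ + o(‖ΔA‖). -/

import Mathlib

set_option maxHeartbeats 1000000
set_option synthInstance.maxHeartbeats 2000000

/-- The holomorphic functional calculus `T ↦ f(T)` (defined by the Cauchy integral over a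
circle `Γ = C(c,R)` enclosing `σ(A)` inside the domain of `f`) is Fréchet differentiable at
`A`, with differential `ΔA ↦ (2πi)⁻¹ ∮_Γ f(λ)(λ−A)⁻¹ ΔA (λ−A)⁻¹ dλ`. -/
theorem holomorphicFunctionalCalculus_hasFDerivAt {X : Type*}
    [NormedAddCommGroup X] [NormedSpace ℂ X] [CompleteSpace X]
    (A : X →L[ℂ] X) (f : ℂ → ℂ) (U : Set ℂ) (hU : IsOpen U)
    (hf : AnalyticOnNhd ℂ f U) (c : ℂ) (R : ℝ) (hR : 0 < R)
    (hΓ : Metric.closedBall c R ⊆ U) (hspec : spectrum ℂ A ⊆ Metric.ball c R) :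
    ∃ L : (X →L[ℂ] X) →L[ℂ] (X →L[ℂ] X),
      (∀ ΔA : X →L[ℂ] X,
        L ΔA = (2 * Real.pi * Complex.I)⁻¹ •
          circleIntegral (fun z => f z •
            (Ring.inverse (z • (1 : X →L[ℂ] X) - A) * ΔA *
              Ring.inverse (z • (1 : X →L[ℂ] X) - A))) c R) ∧
      HasFDerivAt (fun T : X →L[ℂ] X =>
          (2 * Real.pi * Complex.I)⁻¹ •
            circleIntegral (fun z => f z • Ring.inverse (z • (1 : X →L[ℂ] X) - T)) c R)
        L A := by
  classical
  -- for `z` on the circle, `z•1 - A` is a unit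
  have hne : ∀ z ∈ Metric.sphere c R, IsUnit (z • (1 : X →L[ℂ] X) - A) := by
    intro z hz
    have hz' : z ∉ spectrum ℂ A := by
      intro h
      have h1 := hspec h
      rw [Metric.mem_ball] at h1
      rw [Metric.mem_sphere] at hz
      exact absurd hz (ne_of_lt h1)
    have := spectrum.notMem_iff.mp hz'
    rwa [Algebra.algebraMap_eq_smul_one] at this
  -- continuity of the resolvent of A on the sphere
  have hinvA_cont : ContinuousOn
      (fun z : ℂ => Ring.inverse (z • (1 : X →L[ℂ] X) - A)) (Metric.sphere c R) := by
    intro z hz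
    have h1 : Continuous fun z : ℂ => z • (1 : X →L[ℂ] X) - A :=
      (continuous_id.smul continuous_const).sub continuous_const
    have h2 : ContinuousAt Ring.inverse (z • (1 : X →L[ℂ] X) - A) := by
      have := NormedRing.inverse_continuousAt (hne z hz).unit
      rwa [IsUnit.unit_spec] at this
    exact (ContinuousAt.comp (x := z) h2 h1.continuousAt).continuousWithinAt
  -- bound for the resolvent of A on the sphere
  obtain ⟨M0, hM0⟩ := (isCompact_sphere c R).exists_bound_of_continuousOn hinvA_cont
  set M : ℝ := |M0| + 1 with hMdef
  have hM : 0 < M := by positivity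
  have hMbound : ∀ z ∈ Metric.sphere c R,
      ‖Ring.inverse (z • (1 : X →L[ℂ] X) - A)‖ ≤ M := by
    intro z hz
    calc ‖Ring.inverse (z • (1 : X →L[ℂ] X) - A)‖ ≤ M0 := hM0 z hz
      _ ≤ |M0| + 1 := by cases abs_cases M0 <;> linarith
  set δ : ℝ := (2 * M)⁻¹ with hδdef
  have hδ : 0 < δ := by positivity
  set K : ℝ := (‖(1 : X →L[ℂ] X)‖ + 1) * M with hKdef
  have hK : 0 < K := by positivity
  -- key perturbation estimate
  have key : ∀ z ∈ Metric.sphere c R, ∀ T : X →L[ℂ] X, ‖T - A‖ ≤ δ →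
      IsUnit (z • (1 : X →L[ℂ] X) - T) ∧
        ‖Ring.inverse (z • (1 : X →L[ℂ] X) - T)‖ ≤ K := by
    intro z hz T hT
    set B : X →L[ℂ] X := Ring.inverse (z • (1 : X →L[ℂ] X) - A) with hBdef
    set w : X →L[ℂ] X := B * (T - A) with hwdef
    have hw2 : ‖w‖ ≤ 1 / 2 := by
      calc ‖w‖ ≤ ‖B‖ * ‖T - A‖ := norm_mul_le _ _
        _ ≤ M * (2 * M)⁻¹ := by
            apply mul_le_mul (hMbound z hz) hT (norm_nonneg _) hM.le
        _ = 1 / 2 := by field_simp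
    have hw1 : ‖w‖ < 1 := lt_of_le_of_lt hw2 (by norm_num)
    have hfact : z • (1 : X →L[ℂ] X) - T = (z • (1 : X →L[ℂ] X) - A) * (1 - w) := by
      have hcancel : (z • (1 : X →L[ℂ] X) - A) * B = 1 :=
        Ring.mul_inverse_cancel _ (hne z hz)
      symm
      calc (z • (1 : X →L[ℂ] X) - A) * (1 - w)
          = (z • (1 : X →L[ℂ] X) - A) - (z • (1 : X →L[ℂ] X) - A) * B * (T - A) := by
            rw [hwdef]; noncomm_ring
        _ = z • (1 : X →L[ℂ] X) - T := by rw [hcancel]; noncomm_ring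
    have hu1 : IsUnit ((1 : X →L[ℂ] X) - w) := isUnit_one_sub_of_norm_lt_one hw1
    have hunit : IsUnit (z • (1 : X →L[ℂ] X) - T) := by
      rw [hfact]; exact (hne z hz).mul hu1
    refine ⟨hunit, ?_⟩
    have hrev : Ring.inverse (z • (1 : X →L[ℂ] X) - T) =
        Ring.inverse ((1 : X →L[ℂ] X) - w) * B := by
      rw [hfact, hBdef, ← (hne z hz).unit_spec, ← hu1.unit_spec, ← Units.val_mul,
        Ring.inverse_unit, Ring.inverse_unit, Ring.inverse_unit, mul_inv_rev, Units.val_mul]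
    have hgeom : ‖Ring.inverse ((1 : X →L[ℂ] X) - w)‖ ≤ ‖(1 : X →L[ℂ] X)‖ + 1 := by
      rw [← geom_series_eq_inverse w hw1]
      calc ‖∑' n : ℕ, w ^ n‖ ≤ ‖(1 : X →L[ℂ] X)‖ - 1 + (1 - ‖w‖)⁻¹ :=
            tsum_geometric_le_of_norm_lt_one w hw1
        _ ≤ ‖(1 : X →L[ℂ] X)‖ - 1 + 2 := by
            have h12 : (1 : ℝ) - ‖w‖ ≥ 1 / 2 := by linarith
            have : (1 - ‖w‖)⁻¹ ≤ 2 := by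
              rw [inv_le_comm₀ (by linarith) (by norm_num)]
              linarith
            linarith
        _ = ‖(1 : X →L[ℂ] X)‖ + 1 := by ring
    calc ‖Ring.inverse (z • (1 : X →L[ℂ] X) - T)‖
        = ‖Ring.inverse ((1 : X →L[ℂ] X) - w) * B‖ := by rw [hrev]
      _ ≤ ‖Ring.inverse ((1 : X →L[ℂ] X) - w)‖ * ‖B‖ := norm_mul_le _ _
      _ ≤ (‖(1 : X →L[ℂ] X)‖ + 1) * M :=
          mul_le_mul hgeom (hMbound z hz) (norm_nonneg _) (by positivity)
  have hUnit : ∀ z ∈ Metric.sphere c R, ∀ T ∈ Metric.closedBall A δ,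
      IsUnit (z • (1 : X →L[ℂ] X) - T) := by
    intro z hz T hT
    exact (key z hz T (by rwa [Metric.mem_closedBall, dist_eq_norm] at hT)).1
  -- bound for f on the sphere
  have hf_cont : ContinuousOn f U := hf.continuousOn
  obtain ⟨Cf, hCf⟩ := (isCompact_sphere c R).exists_bound_of_continuousOn
    (hf_cont.mono fun z hz => hΓ (Metric.sphere_subset_closedBall hz))
  have hCf' : ∀ z ∈ Metric.sphere c R, ‖f z‖ ≤ |Cf| := fun z hz =>
    le_trans (hCf z hz) (le_abs_self Cf)
  -- the parametrized integrand and its derivative in T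
  set z : ℝ → ℂ := circleMap c R with hzdef
  have hzmem : ∀ θ, z θ ∈ Metric.sphere c R := fun θ => circleMap_mem_sphere c hR.le θ
  set F : (X →L[ℂ] X) → ℝ → (X →L[ℂ] X) := fun T θ =>
    deriv (circleMap c R) θ • (f (z θ) • Ring.inverse (z θ • (1 : X →L[ℂ] X) - T)) with hFdef
  set F' : (X →L[ℂ] X) → ℝ → (X →L[ℂ] X) →L[ℂ] (X →L[ℂ] X) := fun T θ =>
    (deriv (circleMap c R) θ * f (z θ)) •
      ContinuousLinearMap.mulLeftRight ℂ (X →L[ℂ] X)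
        (Ring.inverse (z θ • (1 : X →L[ℂ] X) - T))
        (Ring.inverse (z θ • (1 : X →L[ℂ] X) - T)) with hF'def
  -- continuity lemmas in θ
  have hderiv_cont : Continuous fun θ => deriv (circleMap c R) θ := by
    simp only [deriv_circleMap]
    exact (continuous_circleMap 0 R).mul continuous_const
  have hfz_cont : Continuous fun θ => f (z θ) := by
    apply hf_cont.comp_continuous (continuous_circleMap c R)
    exact fun θ => hΓ (Metric.sphere_subset_closedBall (hzmem θ))
  have hinvθ_cont : ∀ T ∈ Metric.closedBall A δ,
      Continuous fun θ => Ring.inverse (z θ • (1 : X →L[ℂ] X) - T) := by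
    intro T hT
    rw [continuous_iff_continuousAt]
    intro θ
    have h1 : Continuous fun θ => z θ • (1 : X →L[ℂ] X) - T :=
      ((continuous_circleMap c R).smul continuous_const).sub continuous_const
    have h2 : ContinuousAt Ring.inverse (z θ • (1 : X →L[ℂ] X) - T) := by
      have := NormedRing.inverse_continuousAt (hUnit (z θ) (hzmem θ) T hT).unit
      rwa [IsUnit.unit_spec] at this
    exact ContinuousAt.comp (x := θ) h2 h1.continuousAt
  have hF_cont : ∀ T ∈ Metric.closedBall A δ, Continuous (F T) := by
    intro T hT
    exact hderiv_cont.smul (hfz_cont.smul (hinvθ_cont T hT))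
  have hF'_cont : ∀ T ∈ Metric.closedBall A δ, Continuous (F' T) := by
    intro T hT
    have h1 : Continuous fun θ =>
        ContinuousLinearMap.mulLeftRight ℂ (X →L[ℂ] X)
          (Ring.inverse (z θ • (1 : X →L[ℂ] X) - T))
          (Ring.inverse (z θ • (1 : X →L[ℂ] X) - T)) :=
      (ContinuousLinearMap.mulLeftRight ℂ (X →L[ℂ] X)).continuous₂.comp₂
        (hinvθ_cont T hT) (hinvθ_cont T hT)
    exact (hderiv_cont.mul hfz_cont).smul h1
  have hAmem : A ∈ Metric.closedBall A δ := Metric.mem_closedBall_self hδ.le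
  letI : NormedAddCommGroup ((X →L[ℂ] X) →L[ℂ] X →L[ℂ] X) := inferInstance
  haveI : TopologicalSpace.PseudoMetrizableSpace ((X →L[ℂ] X) →L[ℂ] X →L[ℂ] X) :=
    inferInstance
  -- differentiability of F in T
  have h_diff : ∀ θ : ℝ, ∀ T ∈ Metric.ball A δ, HasFDerivAt (fun T' => F T' θ) (F' T θ) T := by
    intro θ T hT
    have hTcb : T ∈ Metric.closedBall A δ := Metric.ball_subset_closedBall hT
    have hu := hUnit (z θ) (hzmem θ) T hTcb
    set B : X →L[ℂ] X := Ring.inverse (z θ • (1 : X →L[ℂ] X) - T) with hBdef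
    have h1 : HasFDerivAt (fun T' : X →L[ℂ] X => z θ • (1 : X →L[ℂ] X) - T')
        (-(ContinuousLinearMap.id ℂ (X →L[ℂ] X))) T :=
      (hasFDerivAt_id T).const_sub (z θ • (1 : X →L[ℂ] X))
    have h2 : HasFDerivAt Ring.inverse
        (-(ContinuousLinearMap.mulLeftRight ℂ (X →L[ℂ] X) B B))
        (z θ • (1 : X →L[ℂ] X) - T) := by
      have he : (↑hu.unit⁻¹ : X →L[ℂ] X) = B := by
        rw [hBdef, ← Ring.inverse_unit hu.unit, hu.unit_spec]
      have := hasFDerivAt_ringInverse (𝕜 := ℂ) hu.unit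
      rwa [he, hu.unit_spec] at this
    have h3 := h2.comp T h1
    have h4 : HasFDerivAt (fun T' : X →L[ℂ] X => Ring.inverse (z θ • (1 : X →L[ℂ] X) - T'))
        (ContinuousLinearMap.mulLeftRight ℂ (X →L[ℂ] X) B B) T := by
      rw [ContinuousLinearMap.comp_neg, ContinuousLinearMap.neg_comp, neg_neg,
        ContinuousLinearMap.comp_id] at h3
      exact h3
    have h5 := (h4.const_smul (f (z θ))).const_smul (deriv (circleMap c R) θ)
    have heq : F' T θ = deriv (circleMap c R) θ • (f (z θ) •
        ContinuousLinearMap.mulLeftRight ℂ (X →L[ℂ] X) B B) := by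
      rw [hF'def]
      simp [smul_smul]
      rfl
    rw [heq]
    exact h5
  -- norm bound on F'
  have h_bound : ∀ θ : ℝ, ∀ T ∈ Metric.ball A δ, ‖F' T θ‖ ≤ R * (|Cf| * (K * K)) := by
    intro θ T hT
    have hTcb : ‖T - A‖ ≤ δ := by
      rw [Metric.mem_ball, dist_eq_norm] at hT
      exact hT.le
    have hB := (key (z θ) (hzmem θ) T hTcb).2
    set B : X →L[ℂ] X := Ring.inverse (z θ • (1 : X →L[ℂ] X) - T) with hBdef
    have h1 : ‖F' T θ‖ ≤ ‖deriv (circleMap c R) θ * f (z θ)‖ * (‖B‖ * ‖B‖) := by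
      simp only [hF'def]
      refine le_trans (norm_smul_le (deriv (circleMap c R) θ * f (z θ))
        (ContinuousLinearMap.mulLeftRight ℂ (X →L[ℂ] X) B B)) ?_
      refine mul_le_mul_of_nonneg_left ?_ (norm_nonneg _)
      exact ContinuousLinearMap.opNorm_mulLeftRight_apply_apply_le ℂ (X →L[ℂ] X) B B
    have h2 : ‖deriv (circleMap c R) θ‖ = R := by
      simp [deriv_circleMap, norm_mul, norm_circleMap_zero, abs_of_pos hR]
    have hBB : ‖B‖ * ‖B‖ ≤ K * K :=
      mul_le_mul hB hB (norm_nonneg _) hK.le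
    calc ‖F' T θ‖ ≤ ‖deriv (circleMap c R) θ * f (z θ)‖ * (‖B‖ * ‖B‖) := h1
      _ = R * (‖f (z θ)‖ * (‖B‖ * ‖B‖)) := by rw [norm_mul, h2]; ring
      _ ≤ R * (|Cf| * (K * K)) := by
          apply mul_le_mul_of_nonneg_left _ hR.le
          apply mul_le_mul (hCf' _ (hzmem θ)) hBB
            (mul_nonneg (norm_nonneg _) (norm_nonneg _)) (abs_nonneg _)
  -- apply the parametric differentiation theorem
  have hMain : HasFDerivAt (fun T => ∫ θ in (0 : ℝ)..(2 * Real.pi), F T θ)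
      (∫ θ in (0 : ℝ)..(2 * Real.pi), F' A θ) A := by
    apply intervalIntegral.hasFDerivAt_integral_of_dominated_of_fderiv_le
      (bound := fun _ => R * (|Cf| * (K * K))) (Metric.ball_mem_nhds A hδ)
    · filter_upwards [Metric.closedBall_mem_nhds A hδ] with T hT
      exact (hF_cont T hT).aestronglyMeasurable
    · exact (hF_cont A hAmem).intervalIntegrable _ _
    · exact (hF'_cont A hAmem).aestronglyMeasurable
    · filter_upwards with θ _ T hT using h_bound θ T hT
    · exact intervalIntegrable_const
    · filter_upwards with θ _ T hT using h_diff θ T hT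
  have hF'int : IntervalIntegrable (F' A) MeasureTheory.volume 0 (2 * Real.pi) :=
    (hF'_cont A hAmem).intervalIntegrable _ _
  refine ⟨((2 * Real.pi * Complex.I)⁻¹ : ℂ) • (∫ θ in (0 : ℝ)..(2 * Real.pi), F' A θ),
    ?_, ?_⟩
  · intro ΔA
    rw [ContinuousLinearMap.smul_apply, ContinuousLinearMap.intervalIntegral_apply hF'int]
    congr 1
    rw [circleIntegral]
    apply intervalIntegral.integral_congr
    intro θ _
    rw [hF'def]
    simp only [ContinuousLinearMap.smul_apply, ContinuousLinearMap.mulLeftRight_apply,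
      smul_smul]
    rfl
  · have heq2 : (fun T : X →L[ℂ] X => (2 * Real.pi * Complex.I)⁻¹ •
        circleIntegral (fun w => f w • Ring.inverse (w • (1 : X →L[ℂ] X) - T)) c R) =
        fun T => ((2 * Real.pi * Complex.I)⁻¹ : ℂ) •
          ∫ θ in (0 : ℝ)..(2 * Real.pi), F T θ := by
      funext T
      rw [circleIntegral]
    rw [heq2]
    exact hMain.const_smul ((2 * Real.pi * Complex.I)⁻¹ : ℂ)
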